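/- arXiv:1212.5663 — 4 statements merged into one kernel-verified Lean document; each statement's English description precedes it below -/
import Mathlib

section
/- Let A be a finite ring with identity, let γ ∈ A be a primitive m-th root of unity, and set x = (1, γ, γ², …, γ^{m-1}). For 0 < k < m, the right dual of the left generalized Reed-Solomon code with support x and multiplier vector x and dimension parameter k (i.e., spanned on the left by the vectors (γ^{0·i}, γ^{1·i}, …, γ^{(m-1)i}) for i = 1,…,k) equals the right Reed-Solomon code with support x and dimension parameter m - k (spanned on the right by (γ^{0·i},…,γ^{(m-1)i}) for i = 0,…,m-k-1). -/
lemma aux_cancel {A : Type*} [Ring A] {S z : A} (hz : IsUnit z) (h : S * z = 0) : S = 0 := by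
  have h2 := congrArg (fun t => t * (↑hz.unit⁻¹ : A)) h
  simpa [mul_assoc] using h2

lemma aux_gamma_unit {A : Type*} [Ring A] {m : ℕ} (hm : 0 < m) {γ : A} (hroot : γ ^ m = 1) :
    IsUnit γ := by
  refine ⟨⟨γ, γ ^ (m - 1), ?_, ?_⟩, rfl⟩
  · rw [← pow_succ']
    rw [show m - 1 + 1 = m by omega, hroot]
  · rw [← pow_succ]
    rw [show m - 1 + 1 = m by omega, hroot]

lemma aux_geo {A : Type*} [Ring A] {m : ℕ} {γ : A} (hroot : γ ^ m = 1)
    (hprim : ∀ i : ℕ, 0 < i → i < m → IsUnit (γ ^ i - 1))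
    {d : ℕ} (hd0 : 0 < d) (hdm : d < m) :
    ∑ j : Fin m, γ ^ ((j : ℕ) * d) = 0 := by
  have h1 : ∑ j : Fin m, γ ^ ((j : ℕ) * d) = ∑ j ∈ Finset.range m, (γ ^ d) ^ j := by
    rw [← Fin.sum_univ_eq_sum_range]
    refine Finset.sum_congr rfl fun j _ => ?_
    rw [← pow_mul, mul_comm]
  have h2 : (∑ j ∈ Finset.range m, (γ ^ d) ^ j) * (γ ^ d - 1) = 0 := by
    rw [geom_sum_mul, ← pow_mul, mul_comm, pow_mul, hroot, one_pow, sub_self]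
  rw [h1]
  exact aux_cancel (hprim d hd0 hdm) h2

lemma aux_diff_unit {A : Type*} [Ring A] {m : ℕ} (hm : 0 < m) {γ : A} (hroot : γ ^ m = 1)
    (hprim : ∀ i : ℕ, 0 < i → i < m → IsUnit (γ ^ i - 1))
    {a b : ℕ} (ha : a < m) (hb : b < m) (hab : a ≠ b) :
    IsUnit (γ ^ a - γ ^ b) := by
  have key : ∀ a b : ℕ, a < m → b < a → IsUnit (γ ^ a - γ ^ b) := by
    intro a b ha hba
    have : γ ^ a - γ ^ b = γ ^ b * (γ ^ (a - b) - 1) := by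
      rw [mul_sub, mul_one, ← pow_add, show b + (a - b) = a by omega]
    rw [this]
    exact ((aux_gamma_unit hm hroot).pow b).mul (hprim (a - b) (by omega) (by omega))
  rcases lt_or_gt_of_ne hab with h | h
  · rw [← neg_sub (γ ^ b) (γ ^ a)]
    exact (key b a hb h).neg
  · exact key a b ha h

lemma aux_prod_unit {R A : Type*} [CommRing R] [Ring A] (f : R →+* A) {ι : Type*}
    (s : Finset ι) (x : ι → R) (h : ∀ t ∈ s, IsUnit (f (x t))) :
    IsUnit (f (∏ t ∈ s, x t)) := by
  classical
  induction s using Finset.induction with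
  | empty => simp
  | insert a s hnot ih =>
    rw [Finset.prod_insert hnot, map_mul]
    exact (h a (Finset.mem_insert_self a s)).mul
      (ih fun t ht => h t (Finset.mem_insert_of_mem ht))

lemma aux_sum_d {A : Type*} [Ring A] {m : ℕ} (hm : 0 < m) {γ : A} (hroot : γ ^ m = 1)
    (hprim : ∀ i : ℕ, 0 < i → i < m → IsUnit (γ ^ i - 1))
    {d : ℕ} (hd : d < 2 * m) :
    ∑ j : Fin m, γ ^ ((j : ℕ) * d) = if d = 0 ∨ d = m then (m : A) else 0 := by
  by_cases h : d = 0 ∨ d = m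
  · rw [if_pos h]
    have h1 : ∀ j : Fin m, γ ^ ((j : ℕ) * d) = 1 := by
      intro j
      rcases h with h | h
      · simp [h]
      · rw [h, mul_comm, pow_mul, hroot, one_pow]
    rw [Finset.sum_congr rfl fun j _ => h1 j]
    simp [Finset.card_univ]
  · rw [if_neg h]
    push_neg at h
    obtain ⟨h0, hm'⟩ := h
    by_cases hlt : d < m
    · exact aux_geo hroot hprim (by omega) hlt
    · have h1 : ∀ j : Fin m, γ ^ ((j : ℕ) * d) = γ ^ ((j : ℕ) * (d - m)) := by
        intro j
        have e1 : (j : ℕ) * d = (j : ℕ) * (d - m) + m * (j : ℕ) := by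
          have e0 : d - m + m = d := Nat.sub_add_cancel (by omega)
          calc (j : ℕ) * d = (j : ℕ) * (d - m + m) := by rw [e0]
            _ = (j : ℕ) * (d - m) + (j : ℕ) * m := Nat.mul_add _ _ _
            _ = (j : ℕ) * (d - m) + m * (j : ℕ) := by rw [Nat.mul_comm (j : ℕ) m]
        rw [e1, pow_add, pow_mul γ m (j : ℕ), hroot, one_pow, mul_one]
      rw [Finset.sum_congr rfl fun j _ => h1 j]
      exact aux_geo hroot hprim (by omega) (by omega)

lemma aux_m_unit {A : Type*} [Ring A] {m : ℕ} (hm : 0 < m) {γ : A} (hroot : γ ^ m = 1)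
    (hprim : ∀ i : ℕ, 0 < i → i < m → IsUnit (γ ^ i - 1)) :
    IsUnit ((m : A)) := by
  haveI : NeZero m := ⟨by omega⟩
  set R := Subring.closure ({γ} : Set A) with hR
  letI : CommRing R := Subring.closureCommRingOfComm (by simp)
  have hγR : γ ∈ R := Subring.subset_closure rfl
  set g : R := ⟨γ, hγR⟩ with hg
  set f : R →+* A := (Subring.subtype R) with hf
  have hinj : Function.Injective f := Subtype.val_injective
  have hfg : f g = γ := rfl
  set σ : Equiv.Perm (Fin m) := Equiv.neg (Fin m) with hσ
  set M : Matrix (Fin m) (Fin m) R := Matrix.vandermonde (fun i => g ^ (i : ℕ)) with hM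
  have hMM : M * M = (m : R) • σ.permMatrix R := by
    ext i l
    show f ((M * M) i l) = f (((m : R) • σ.permMatrix R) i l)
    rw [Matrix.mul_apply, map_sum]
    have hL : ∀ j : Fin m, f (M i j * M j l) = γ ^ ((j : ℕ) * ((i : ℕ) + (l : ℕ))) := by
      intro j
      rw [hM]
      rw [map_mul]
      simp only [Matrix.vandermonde_apply]
      rw [map_pow, map_pow, map_pow, map_pow, hfg]
      rw [← pow_mul, ← pow_mul, ← pow_add]
      congr 1
      ring
    rw [Finset.sum_congr rfl (fun j _ => hL j)]
    have hRHS : f (((m : R) • σ.permMatrix R) i l)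
        = (m : A) * (if σ i = l then 1 else 0) := by
      rw [Matrix.smul_apply, smul_eq_mul, map_mul, map_natCast]
      congr 1
      simp only [Equiv.Perm.permMatrix, PEquiv.toMatrix_apply, Equiv.toPEquiv_apply,
        Option.mem_def, Option.some.injEq]
      split <;> simp
    rw [hRHS]
    have hcond : (σ i = l) ↔ ((i : ℕ) + (l : ℕ) = 0 ∨ (i : ℕ) + (l : ℕ) = m) := by
      rw [hσ]
      simp only [Equiv.neg_apply]
      constructor
      · intro h
        have hv : (l : ℕ) = (m - (i : ℕ)) % m := by rw [← h]; exact Fin.coe_neg i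
        rcases Nat.eq_zero_or_pos (i : ℕ) with h0 | h0
        · left
          rw [hv, h0]
          simp
        · right
          rw [hv, Nat.mod_eq_of_lt (by omega)]
          omega
      · intro h
        have hil : (i : ℕ) < m := i.isLt
        have hll : (l : ℕ) < m := l.isLt
        apply Fin.ext
        rw [Fin.coe_neg]
        rcases h with h | h
        · have : (i : ℕ) = 0 := by omega
          rw [this]
          simp
          omega
        · rw [Nat.mod_eq_of_lt (by omega)]
          omega
    rw [aux_sum_d hm hroot hprim (by have := i.isLt; have := l.isLt; omega)]
    by_cases hc : σ i = l
    · rw [if_pos (hcond.mp hc), if_pos hc, mul_one]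
    · rw [if_neg (fun h => hc (hcond.mpr h)), if_neg hc, mul_zero]
  have hdetu : IsUnit (f M.det) := by
    rw [hM, Matrix.det_vandermonde]
    refine aux_prod_unit f _ _ fun i _ => ?_
    refine aux_prod_unit f _ _ fun j hj => ?_
    rw [map_sub, map_pow, map_pow, hfg]
    have hij : i < j := Finset.mem_Ioi.mp hj
    have hij' : (i : ℕ) < (j : ℕ) := Fin.lt_def.mp hij
    exact aux_diff_unit hm hroot hprim j.isLt i.isLt (by omega)
  have hdet := congrArg Matrix.det hMM
  rw [Matrix.det_mul, Matrix.det_smul, Matrix.det_permutation, Fintype.card_fin] at hdet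
  have hpow : IsUnit ((m : A) ^ m) := by
    rcases Int.units_eq_one_or (Equiv.Perm.sign σ) with hs | hs <;> rw [hs] at hdet <;>
      simp only [Units.val_neg, Units.val_one, Int.cast_neg, Int.cast_one, mul_neg,
        mul_one] at hdet
    · have h1 : (m : R) ^ m = M.det * M.det := hdet.symm
      have h2 : (m : A) ^ m = f M.det * f M.det := by
        rw [← map_mul, ← h1, map_pow, map_natCast]
      rw [h2]
      exact hdetu.mul hdetu
    · have h1 : (m : R) ^ m = -(M.det * M.det) := by linear_combination hdet
      have h2 : (m : A) ^ m = -(f M.det * f M.det) := by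
        rw [← map_mul, ← map_neg, ← h1, map_pow, map_natCast]
      rw [h2]
      exact (hdetu.mul hdetu).neg
  exact (isUnit_pow_iff (by omega)).mp hpow

/-- over a finite ring `A` with `γ` a primitive `m`-th root of unity and
`0 < k < m`, the right dual of the left generalized Reed–Solomon code with support and
multiplier `x = (1, γ, …, γ^{m-1})` and dimension `k` (left-spanned by the vectors
`(γ^{ji})_j` for `i = 1,…,k`) equals the right Reed–Solomon code with support `x`
and dimension `m - k` (right-spanned by `(γ^{ji})_j` for `i = 0,…,m-k-1`). -/
theorem stmt_4 {A : Type*} [Ring A] [Fintype A] {m k : ℕ}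
    (hk : 0 < k) (hkm : k < m) (γ : A)
    (hroot : γ ^ m = 1)
    (hprim : ∀ i : ℕ, 0 < i → i < m → IsUnit (γ ^ i - 1)) :
    {y : Fin m → A | ∀ s ∈ {w : Fin m → A | ∃ c : Fin k → A,
        ∀ j, w j = ∑ i : Fin k, c i * γ ^ ((j : ℕ) * ((i : ℕ) + 1))},
      ∑ j : Fin m, s j * y j = 0}
    = {w : Fin m → A | ∃ c : Fin (m - k) → A,
        ∀ j, w j = ∑ i : Fin (m - k), γ ^ ((j : ℕ) * (i : ℕ)) * c i} := by
  have hm : 0 < m := by omega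
  have hmunit : IsUnit ((m : A)) := aux_m_unit hm hroot hprim
  ext y
  simp only [Set.mem_setOf_eq]
  constructor
  · intro hy
    set u := hmunit.unit with hu
    have huval : (u : A) = (m : A) := hmunit.unit_spec
    have hucomm : ∀ x : A, (↑u⁻¹ : A) * x = x * (↑u⁻¹ : A) := by
      intro x
      have h1 : Commute x (↑u : A) := by rw [huval]; exact (Nat.cast_commute m x).symm
      exact (h1.units_inv_right).symm
    have key : ∀ a : ℕ, 1 ≤ a → a ≤ k → ∑ l : Fin m, γ ^ ((l : ℕ) * a) * y l = 0 := by
      intro a h1 h2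
      have ht0 : ((⟨a - 1, by omega⟩ : Fin k) : ℕ) + 1 = a := by
        simp only [Fin.val_mk]; omega
      refine hy (fun j => γ ^ ((j : ℕ) * a)) ⟨fun t => if t = ⟨a - 1, by omega⟩ then 1 else 0,
        fun j => ?_⟩
      rw [Finset.sum_eq_single (⟨a - 1, by omega⟩ : Fin k)
        (fun b _ hb => by beta_reduce; rw [if_neg hb, zero_mul])
        (fun h => absurd (Finset.mem_univ _) h)]
      beta_reduce
      rw [if_pos rfl, one_mul, ht0]
    set C : ℕ → A := fun i => (↑u⁻¹ : A) * ∑ l : Fin m, γ ^ ((l : ℕ) * (m - i)) * y l with hC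
    have hCzero : ∀ i : ℕ, m - k ≤ i → i < m → C i = 0 := by
      intro i h1 h2
      simp only [hC]
      rw [key (m - i) (by omega) (by omega), mul_zero]
    have hT : ∀ (j l : Fin m),
        ∑ i ∈ Finset.range m, γ ^ ((j : ℕ) * i) * γ ^ ((l : ℕ) * (m - i))
          = if l = j then (m : A) else 0 := by
      intro j l
      by_cases hc : l = j
      · subst hc
        rw [if_pos rfl]
        have h1 : ∀ i ∈ Finset.range m, γ ^ ((l : ℕ) * i) * γ ^ ((l : ℕ) * (m - i)) = 1 := by
          intro i hi
          rw [Finset.mem_range] at hi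
          rw [← pow_add, ← Nat.mul_add, show i + (m - i) = m by omega, mul_comm, pow_mul,
            hroot, one_pow]
        rw [Finset.sum_congr rfl h1]
        simp
      · rw [if_neg hc]
        have h1 : ∀ i ∈ Finset.range m, γ ^ ((j : ℕ) * i) * γ ^ ((l : ℕ) * (m - i))
            = ((γ ^ (j : ℕ)) ^ i * (γ ^ (l : ℕ)) ^ (m - 1 - i)) * γ ^ (l : ℕ) := by
          intro i hi
          rw [Finset.mem_range] at hi
          have e : (l : ℕ) * (m - i) = (l : ℕ) * (m - 1 - i) + (l : ℕ) := by
            rw [show m - i = (m - 1 - i) + 1 by omega, Nat.mul_add, Nat.mul_one]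
          rw [e, pow_add, ← pow_mul, ← pow_mul, mul_assoc]
        rw [Finset.sum_congr rfl h1, ← Finset.sum_mul]
        have hcom : Commute (γ ^ (j : ℕ)) (γ ^ (l : ℕ)) := (Commute.refl γ).pow_pow _ _
        have h2 := hcom.geom_sum₂_mul m
        have h3 : (γ ^ (j : ℕ)) ^ m - (γ ^ (l : ℕ)) ^ m = 0 := by
          rw [← pow_mul, ← pow_mul, mul_comm (j : ℕ) m, mul_comm (l : ℕ) m, pow_mul, pow_mul,
            hroot, one_pow, one_pow, sub_self]
        rw [h3] at h2
        have h4 : IsUnit (γ ^ (j : ℕ) - γ ^ (l : ℕ)) :=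
          aux_diff_unit hm hroot hprim j.isLt l.isLt
            (fun h => hc (Fin.val_injective h).symm)
        rw [aux_cancel h4 h2, zero_mul]
    have hFour : ∀ j : Fin m, ∑ i ∈ Finset.range m, γ ^ ((j : ℕ) * i) * C i = y j := by
      intro j
      have e1 : ∀ i, γ ^ ((j : ℕ) * i) * C i
          = (↑u⁻¹ : A) * (γ ^ ((j : ℕ) * i) * ∑ l : Fin m, γ ^ ((l : ℕ) * (m - i)) * y l) := by
        intro i
        simp only [hC]
        rw [← mul_assoc, ← hucomm, mul_assoc]
      rw [Finset.sum_congr rfl fun i _ => e1 i, ← Finset.mul_sum]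
      have e2 : ∑ i ∈ Finset.range m,
            γ ^ ((j : ℕ) * i) * ∑ l : Fin m, γ ^ ((l : ℕ) * (m - i)) * y l
          = ∑ l : Fin m,
            (∑ i ∈ Finset.range m, γ ^ ((j : ℕ) * i) * γ ^ ((l : ℕ) * (m - i))) * y l := by
        simp only [Finset.mul_sum]
        rw [Finset.sum_comm]
        refine Finset.sum_congr rfl fun l _ => ?_
        rw [Finset.sum_mul]
        exact Finset.sum_congr rfl fun i _ => (mul_assoc _ _ _).symm
      rw [e2]
      have e3 : ∑ l : Fin m,
            (∑ i ∈ Finset.range m, γ ^ ((j : ℕ) * i) * γ ^ ((l : ℕ) * (m - i))) * y l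
          = (m : A) * y j := by
        rw [Finset.sum_congr rfl fun l _ => by rw [hT j l]]
        simp only [ite_mul, zero_mul]
        rw [Fintype.sum_ite_eq' j (fun l => (m : A) * y l)]
      rw [e3, ← huval, ← mul_assoc, Units.inv_mul, one_mul]
    refine ⟨fun i => C (i : ℕ), fun j => ?_⟩
    rw [← hFour j, Fin.sum_univ_eq_sum_range (fun i => γ ^ ((j : ℕ) * i) * C i) (m - k)]
    refine (Finset.sum_subset (Finset.range_subset_range.mpr (by omega)) fun x hx hnx => ?_).symm
    rw [Finset.mem_range] at hx
    rw [Finset.mem_range] at hnx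
    rw [hCzero x (by omega) hx, mul_zero]
  · rintro ⟨c, hcy⟩ s ⟨cs, hcs⟩
    calc ∑ j : Fin m, s j * y j
        = ∑ j : Fin m, ∑ t : Fin k, ∑ i : Fin (m - k),
            cs t * (γ ^ ((j : ℕ) * (((t : ℕ) + 1) + (i : ℕ))) * c i) := by
          refine Finset.sum_congr rfl fun j _ => ?_
          rw [hcs j, hcy j, Finset.sum_mul]
          refine Finset.sum_congr rfl fun t _ => ?_
          rw [Finset.mul_sum]
          refine Finset.sum_congr rfl fun i _ => ?_
          rw [mul_assoc, ← mul_assoc (γ ^ ((j : ℕ) * ((t : ℕ) + 1))), ← pow_add, ← Nat.mul_add]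
      _ = ∑ t : Fin k, ∑ i : Fin (m - k),
            cs t * ((∑ j : Fin m, γ ^ ((j : ℕ) * (((t : ℕ) + 1) + (i : ℕ)))) * c i) := by
          rw [Finset.sum_comm]
          refine Finset.sum_congr rfl fun t _ => ?_
          rw [Finset.sum_comm]
          refine Finset.sum_congr rfl fun i _ => ?_
          rw [← Finset.mul_sum, ← Finset.sum_mul]
      _ = 0 := by
          refine Finset.sum_eq_zero fun t _ => Finset.sum_eq_zero fun i _ => ?_
          rw [aux_geo hroot hprim (by omega)
            (by have := t.isLt; have := i.isLt; omega), zero_mul, mul_zero]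
end

section
/- Let A be a finite ring with identity, γ ∈ A a primitive m-th root of unity, x = (1,γ,…,γ^{m-1}), and 0 < k < m. Then the left dual of the right Reed-Solomon code over A with support x and dimension m - k equals the left generalized Reed-Solomon code with support x, multiplier x, and dimension k. -/
section Aux
open Matrix
variable {A : Type*} [Ring A] {m : ℕ} {γ : A}

lemma pow_mod_m (hroot : γ ^ m = 1) (n : ℕ) : γ ^ n = γ ^ (n % m) := by
  conv_lhs => rw [← Nat.div_add_mod n m]
  rw [pow_add, pow_mul, hroot, one_pow, one_mul]

lemma sum_pow_eq_zero (hroot : γ ^ m = 1)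
    (hprim : ∀ i : ℕ, 0 < i → i < m → IsUnit (γ ^ i - 1))
    {a : ℕ} (ha : ¬ m ∣ a) :
    ∑ s ∈ Finset.range m, γ ^ (s * a) = 0 := by
  by_cases hm0 : m = 0
  · subst hm0; simp
  have hm : 0 < m := Nat.pos_of_ne_zero hm0
  set β := γ ^ a with hβ
  have hb : ∀ s : ℕ, γ ^ (s * a) = β ^ s := fun s => by
    rw [hβ, ← pow_mul, mul_comm]
  have hβm : β ^ m = 1 := by rw [hβ, ← pow_mul, mul_comm, pow_mul, hroot, one_pow]
  have hu : IsUnit (β - 1) := by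
    have : β = γ ^ (a % m) := pow_mod_m hroot a
    rw [this]
    exact hprim (a % m) (Nat.pos_of_ne_zero fun h => ha (Nat.dvd_of_mod_eq_zero h))
      (Nat.mod_lt _ hm)
  have key : (∑ s ∈ Finset.range m, β ^ s) * (β - 1) = 0 := by
    rw [geom_sum_mul, hβm, sub_self]
  have := congrArg (· * (↑hu.unit⁻¹ : A)) key
  simp only [zero_mul] at this
  rw [mul_assoc] at this
  simp only [IsUnit.mul_val_inv, mul_one] at this
  calc ∑ s ∈ Finset.range m, γ ^ (s * a) = ∑ s ∈ Finset.range m, β ^ s := by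
        exact Finset.sum_congr rfl fun s _ => hb s
    _ = 0 := this

lemma sum_pow_eq_m (hroot : γ ^ m = 1) {a : ℕ} (ha : m ∣ a) :
    ∑ s ∈ Finset.range m, γ ^ (s * a) = (m : A) := by
  obtain ⟨b, rfl⟩ := ha
  have : ∀ s : ℕ, γ ^ (s * (m * b)) = 1 := fun s => by
    rw [show s * (m * b) = m * (s * b) by ring, pow_mul, hroot, one_pow]
  simp [this]

lemma isUnit_gamma (hroot : γ ^ m = 1) (hm : 0 < m) : IsUnit γ := by
  refine isUnit_iff_exists.mpr ⟨γ ^ (m - 1), ?_, ?_⟩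
  · rw [← pow_succ', show m - 1 + 1 = m by omega, hroot]
  · rw [← pow_succ, show m - 1 + 1 = m by omega, hroot]

lemma isUnit_m (hroot : γ ^ m = 1)
    (hprim : ∀ i : ℕ, 0 < i → i < m → IsUnit (γ ^ i - 1)) (hm : 0 < m) :
    IsUnit (m : A) := by
  have hγ : IsUnit γ := isUnit_gamma hroot hm
  letI B := Subring.closure ({γ} : Set A)
  letI : CommRing B := Subring.closureCommRingOfComm (by rintro a rfl b rfl; rfl)
  set g : B := ⟨γ, Subring.subset_closure rfl⟩ with hg
  have hcoe_pow : ∀ (b : B) (n : ℕ), ((b ^ n : B) : A) = (b : A) ^ n := fun b n => by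
    exact SubmonoidClass.coe_pow b n
  set v : Fin m → B := fun i => g ^ (i : ℕ) with hv
  set w : Fin m → B := fun t => g ^ (m - (t : ℕ)) with hw
  set U := Matrix.vandermonde v with hU
  set W := Matrix.vandermonde w with hW
  -- U * Wᵀ = m • 1
  have entry : ∀ i t : Fin m, (((U * Wᵀ) i t : B) : A) = if i = t then (m : A) else 0 := by
    intro i t
    rw [hU, hW, Matrix.vandermonde_mul_vandermonde_transpose]
    have : ∀ s : Fin m, ((v i * w t) ^ (s : ℕ) : B) = (⟨γ ^ (((i : ℕ) + (m - (t : ℕ))) * (s : ℕ)),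
        by
          have : γ ^ (((i : ℕ) + (m - (t : ℕ))) * (s : ℕ)) = ((g ^ (((i : ℕ) + (m - (t : ℕ))) * (s : ℕ)) : B) : A) := by
            rw [hcoe_pow]
          rw [this]; exact (g ^ _).2⟩ : B) := by
      intro s
      apply Subtype.ext
      rw [hcoe_pow]
      push_cast [hv, hw, hcoe_pow]
      rw [← pow_add, ← pow_mul]
    rw [Finset.sum_congr rfl (fun s _ => this s)]
    have hcs : ((∑ s : Fin m, (⟨γ ^ (((i : ℕ) + (m - (t : ℕ))) * (s : ℕ)), by
        have : γ ^ (((i : ℕ) + (m - (t : ℕ))) * (s : ℕ)) = ((g ^ (((i : ℕ) + (m - (t : ℕ))) * (s : ℕ)) : B) : A) := by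
          rw [hcoe_pow]
        rw [this]; exact (g ^ _).2⟩ : B) : B) : A)
        = ∑ s : Fin m, γ ^ (((i : ℕ) + (m - (t : ℕ))) * (s : ℕ)) := by
      exact map_sum B.subtype _ _
    rw [hcs]
    have hconv : ∑ s : Fin m, γ ^ (((i : ℕ) + (m - (t : ℕ))) * (s : ℕ))
        = ∑ s ∈ Finset.range m, γ ^ (s * ((i : ℕ) + (m - (t : ℕ)))) := by
      rw [Finset.sum_range fun s => γ ^ (s * ((i : ℕ) + (m - (t : ℕ))))]
      exact Finset.sum_congr rfl fun s _ => by rw [mul_comm]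
    rw [hconv]
    by_cases hit : i = t
    · subst hit
      rw [if_pos rfl]
      exact sum_pow_eq_m hroot ⟨1, by have := i.isLt; omega⟩
    · rw [if_neg hit]
      apply sum_pow_eq_zero hroot hprim
      have hi := i.isLt; have ht := t.isLt
      have hne : (i : ℕ) ≠ (t : ℕ) := fun h => hit (Fin.ext h)
      rintro ⟨c, hc⟩
      have h1 : 0 < (i : ℕ) + (m - (t : ℕ)) := by omega
      have h2 : (i : ℕ) + (m - (t : ℕ)) < 2 * m := by omega
      have h3 : (i : ℕ) + (m - (t : ℕ)) ≠ m := by omega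
      rcases Nat.lt_or_ge c 2 with h | h
      · interval_cases c <;> omega
      · have : 2 * m ≤ m * c := by
          calc 2 * m = m * 2 := by ring
          _ ≤ m * c := Nat.mul_le_mul_left m h
        omega
  have hUW : U * Wᵀ = Matrix.diagonal (fun _ : Fin m => (m : B)) := by
    ext i t
    rw [entry i t, Matrix.diagonal_apply]
    by_cases hit : i = t <;> simp [hit]
  have hdet : U.det * W.det = (m : B) ^ m := by
    have h1 : (U * Wᵀ).det = (m : B) ^ m := by
      rw [hUW, Matrix.det_diagonal]
      simp
    rw [← h1, Matrix.det_mul, Matrix.det_transpose]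
  -- coerce to A
  have hdetA : ((U.det : B) : A) * ((W.det : B) : A) = (m : A) ^ m := by
    have := congrArg (B.subtype) hdet
    simpa using this
  -- units
  have coeP : ∀ (s : Finset (Fin m)) (f : Fin m → B),
      (∀ i ∈ s, IsUnit ((f i : A))) → IsUnit ((∏ i ∈ s, f i : B) : A) := by
    intro s f h
    refine Finset.prod_induction f (fun x : B => IsUnit ((x : B) : A)) ?_ (by simp) h
    intro a b ha hb
    have : (((a * b : B) : A)) = (a : A) * (b : A) := rfl
    rw [this]; exact ha.mul hb
  have hUdet : IsUnit ((U.det : B) : A) := by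
    rw [hU, Matrix.det_vandermonde]
    apply coeP
    intro i _
    apply coeP
    intro j hj
    have hij0 : i < j := Finset.mem_Ioi.mp hj
    have hij : (i : ℕ) < (j : ℕ) := hij0
    have hco : (((v j - v i : B)) : A) = γ ^ (j : ℕ) - γ ^ (i : ℕ) := by
      push_cast [hv, hcoe_pow]; rfl
    rw [hco]
    have hfac : γ ^ (j : ℕ) - γ ^ (i : ℕ) = γ ^ (i : ℕ) * (γ ^ ((j : ℕ) - (i : ℕ)) - 1) := by
      rw [mul_sub, mul_one, ← pow_add, Nat.add_sub_cancel' (le_of_lt hij)]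
    rw [hfac]
    exact (hγ.pow _).mul (hprim _ (by omega) (by have := j.isLt; omega))
  have hWdet : IsUnit ((W.det : B) : A) := by
    rw [hW, Matrix.det_vandermonde]
    apply coeP
    intro i _
    apply coeP
    intro j hj
    have hij0 : i < j := Finset.mem_Ioi.mp hj
    have hij : (i : ℕ) < (j : ℕ) := hij0
    have hi := i.isLt; have hjlt := j.isLt
    have hco : (((w j - w i : B)) : A) = γ ^ (m - (j : ℕ)) - γ ^ (m - (i : ℕ)) := by
      push_cast [hw, hcoe_pow]; rfl
    rw [hco]
    have hfac : γ ^ (m - (j : ℕ)) - γ ^ (m - (i : ℕ))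
        = -(γ ^ (m - (j : ℕ)) * (γ ^ ((j : ℕ) - (i : ℕ)) - 1)) := by
      rw [mul_sub, mul_one, ← pow_add, show m - (j : ℕ) + ((j : ℕ) - (i : ℕ)) = m - (i : ℕ) by omega]
      exact (neg_sub _ _).symm
    rw [hfac]
    exact ((hγ.pow _).mul (hprim _ (by omega) (by omega))).neg
  have hmm : IsUnit ((m : A) ^ m) := by
    rw [← hdetA]; exact hUdet.mul hWdet
  -- conclude
  set z := (↑hmm.unit⁻¹ : A) with hz
  have hmz : (m : A) ^ m * z = 1 := IsUnit.mul_val_inv hmm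
  have hzm : z * (m : A) ^ m = 1 := IsUnit.val_inv_mul hmm
  have hcz : Commute ((m : ℕ) : A) z :=
    ((Nat.cast_commute m ((m : A) ^ m))).units_inv_right (u := hmm.unit)
  refine isUnit_iff_exists.mpr ⟨(m : A) ^ (m - 1) * z, ?_, ?_⟩
  · rw [← mul_assoc, ← pow_succ', show m - 1 + 1 = m by omega, hmz]
  · rw [mul_assoc, ← hcz.eq, ← mul_assoc, ← pow_succ, show m - 1 + 1 = m by omega, hmz]
end Aux

theorem stmt_5' {A : Type*} [Ring A] {m k : ℕ}
    (hk : 0 < k) (hkm : k < m) (γ : A)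
    (hroot : γ ^ m = 1)
    (hprim : ∀ i : ℕ, 0 < i → i < m → IsUnit (γ ^ i - 1))
    (hmu : IsUnit ((m : ℕ) : A)) :
    {y : Fin m → A | ∀ s ∈ {w : Fin m → A | ∃ c : Fin (m - k) → A,
        ∀ j, w j = ∑ i : Fin (m - k), γ ^ ((j : ℕ) * (i : ℕ)) * c i},
      ∑ j : Fin m, y j * s j = 0}
    = {w : Fin m → A | ∃ c : Fin k → A,
        ∀ j, w j = ∑ i : Fin k, c i * γ ^ ((j : ℕ) * ((i : ℕ) + 1))} := by
  have hm : 0 < m := lt_trans hk hkm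
  have hmk : 0 < m - k := by omega
  have hγ : IsUnit γ := isUnit_gamma hroot hm
  ext y
  simp only [Set.mem_setOf_eq]
  constructor
  · intro h
    have hC : ∀ t : ℕ, t < m - k → ∑ j : Fin m, y j * γ ^ ((j : ℕ) * t) = 0 := by
      intro t ht
      refine h (fun j => γ ^ ((j : ℕ) * t)) ⟨Pi.single ⟨t, ht⟩ 1, fun j => ?_⟩
      rw [Finset.sum_eq_single (⟨t, ht⟩ : Fin (m - k))]
      · simp
      · intro b _ hb
        rw [Pi.single_eq_of_ne hb, mul_zero]
      · intro hmem; exact absurd (Finset.mem_univ _) hmem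
    set z := (↑hmu.unit⁻¹ : A) with hz
    refine ⟨fun i => z * ∑ j' : Fin m, y j' * γ ^ ((j' : ℕ) * (m - ((i : ℕ) + 1))), fun j => ?_⟩
    set term : ℕ → A :=
      fun s => ∑ j' : Fin m, y j' * γ ^ ((j' : ℕ) * (m - s) + (j : ℕ) * s) with hterm
    -- step (a): rewrite the claimed sum
    have ha : ∀ i : Fin k,
        (z * ∑ j' : Fin m, y j' * γ ^ ((j' : ℕ) * (m - ((i : ℕ) + 1)))) *
          γ ^ ((j : ℕ) * ((i : ℕ) + 1)) = z * term ((i : ℕ) + 1) := by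
      intro i
      rw [mul_assoc, Finset.sum_mul]
      congr 1
      rw [hterm]
      refine Finset.sum_congr rfl fun j' _ => ?_
      rw [mul_assoc, ← pow_add]
    -- step (b): vanishing outside [1, k]
    have hvanish : ∀ s ∈ Finset.range m, s ∉ Finset.Ico 1 (k + 1) → term s = 0 := by
      intro s hs hns
      rw [Finset.mem_range] at hs
      rw [Finset.mem_Ico] at hns
      push_neg at hns
      rcases Nat.eq_zero_or_pos s with h0 | hpos
      · subst h0
        have h1 := hC 0 hmk
        simp only [Nat.mul_zero, pow_zero, mul_one] at h1
        simp only [hterm, Nat.sub_zero, Nat.mul_zero, Nat.add_zero]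
        calc ∑ j' : Fin m, y j' * γ ^ ((j' : ℕ) * m)
            = ∑ j' : Fin m, y j' := Finset.sum_congr rfl (fun j' _ => by
              rw [mul_comm ((j' : ℕ)) m, pow_mul, hroot, one_pow, mul_one])
          _ = 0 := h1
      · have hks : k + 1 ≤ s := hns hpos
        have hlt : m - s < m - k := by omega
        have h1 := hC (m - s) hlt
        simp only [hterm]
        calc ∑ j' : Fin m, y j' * γ ^ ((j' : ℕ) * (m - s) + (j : ℕ) * s)
            = (∑ j' : Fin m, y j' * γ ^ ((j' : ℕ) * (m - s))) * γ ^ ((j : ℕ) * s) := by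
              rw [Finset.sum_mul]
              exact Finset.sum_congr rfl fun j' _ => by rw [pow_add, mul_assoc]
          _ = 0 := by rw [h1, zero_mul]
    -- step (c): full sum equals y j * m
    have hfull : ∑ s ∈ Finset.range m, term s = y j * ((m : ℕ) : A) := by
      have hswap : ∑ s ∈ Finset.range m, term s
          = ∑ j' : Fin m, y j' * ∑ s ∈ Finset.range m,
              γ ^ ((j' : ℕ) * (m - s) + (j : ℕ) * s) := by
        rw [hterm, Finset.sum_comm]
        exact Finset.sum_congr rfl fun j' _ => (Finset.mul_sum _ _ _).symm
      rw [hswap]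
      have hinner : ∀ j' : Fin m, ∑ s ∈ Finset.range m,
          γ ^ ((j' : ℕ) * (m - s) + (j : ℕ) * s)
          = if j' = j then ((m : ℕ) : A) else 0 := by
        intro j'
        have hexp : ∀ s ∈ Finset.range m, γ ^ ((j' : ℕ) * (m - s) + (j : ℕ) * s)
            = γ ^ (s * ((j : ℕ) + (m - (j' : ℕ)))) := by
          intro s hs
          rw [Finset.mem_range] at hs
          have hsm : s ≤ m := le_of_lt hs
          have hj'm : (j' : ℕ) ≤ m := le_of_lt j'.isLt
          refine (hγ.pow (s * (j' : ℕ))).mul_right_cancel ?_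
          rw [← pow_add, ← pow_add]
          have e0 : (j' : ℕ) * (m - s) + (j' : ℕ) * s = (j' : ℕ) * m := by
            rw [← Nat.left_distrib, Nat.sub_add_cancel hsm]
          have e1 : (j' : ℕ) * (m - s) + (j : ℕ) * s + s * (j' : ℕ)
              = (j' : ℕ) * m + (j : ℕ) * s := by
            rw [Nat.add_right_comm, mul_comm s ((j' : ℕ)), e0]
          have e2 : s * ((j : ℕ) + (m - (j' : ℕ))) + s * (j' : ℕ)
              = s * (j : ℕ) + s * m := by
            rw [Nat.left_distrib, Nat.add_assoc, ← Nat.left_distrib,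
              Nat.sub_add_cancel hj'm]
          rw [e1, e2, pow_mod_m hroot ((j' : ℕ) * m + (j : ℕ) * s),
            pow_mod_m hroot (s * (j : ℕ) + s * m)]
          congr 1
          rw [Nat.add_comm ((j' : ℕ) * m) ((j : ℕ) * s), Nat.add_mul_mod_self_right,
            Nat.add_mul_mod_self_right, mul_comm]
        rw [Finset.sum_congr rfl hexp]
        by_cases hjj : j' = j
        · subst hjj
          rw [if_pos rfl]
          exact sum_pow_eq_m hroot ⟨1, by have := j'.isLt; omega⟩
        · rw [if_neg hjj]
          apply sum_pow_eq_zero hroot hprim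
          have hj := j.isLt; have hj' := j'.isLt
          have hne : (j' : ℕ) ≠ (j : ℕ) := fun hh => hjj (Fin.ext hh)
          rintro ⟨c, hc⟩
          rcases Nat.lt_or_ge c 2 with hcc | hcc
          · interval_cases c <;> omega
          · have : 2 * m ≤ m * c := by
              calc 2 * m = m * 2 := by ring
              _ ≤ m * c := Nat.mul_le_mul_left m hcc
            omega
      rw [Finset.sum_congr rfl fun j' _ => by rw [hinner j']]
      rw [Finset.sum_eq_single j]
      · rw [if_pos rfl]
      · intro b _ hb; rw [if_neg hb, mul_zero]
      · intro hmem; exact absurd (Finset.mem_univ _) hmem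
    -- combine
    calc y j = z * (y j * ((m : ℕ) : A)) := by
          rw [← (Nat.cast_commute m (y j)).eq, ← mul_assoc, hz,
            IsUnit.val_inv_mul, one_mul]
      _ = z * ∑ s ∈ Finset.range m, term s := by rw [hfull]
      _ = z * ∑ s ∈ Finset.Ico 1 (k + 1), term s := by
          rw [Finset.sum_subset ?_ hvanish]
          intro x hx
          rw [Finset.mem_Ico] at hx
          rw [Finset.mem_range]
          omega
      _ = z * ∑ i ∈ Finset.range k, term (1 + i) := by
          rw [Finset.sum_Ico_eq_sum_range]
          norm_num
      _ = ∑ i : Fin k, z * term ((i : ℕ) + 1) := by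
          rw [Finset.mul_sum, Finset.sum_range fun i => z * term (1 + i)]
          exact Finset.sum_congr rfl fun i _ => by rw [Nat.add_comm]
      _ = ∑ i : Fin k,
            (z * ∑ j' : Fin m, y j' * γ ^ ((j' : ℕ) * (m - ((i : ℕ) + 1)))) *
              γ ^ ((j : ℕ) * ((i : ℕ) + 1)) :=
          (Finset.sum_congr rfl fun i _ => (ha i).symm)
  · rintro ⟨c, hcy⟩ s ⟨c', hc'⟩
    have hterm : ∀ j : Fin m, y j * s j
        = ∑ i : Fin k, ∑ t : Fin (m - k),
            c i * γ ^ ((j : ℕ) * ((i : ℕ) + 1) + (j : ℕ) * (t : ℕ)) * c' t := by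
      intro j
      rw [hcy j, hc' j, Finset.sum_mul]
      refine Finset.sum_congr rfl fun i _ => ?_
      rw [Finset.mul_sum]
      refine Finset.sum_congr rfl fun t _ => ?_
      rw [pow_add, ← mul_assoc, ← mul_assoc]
    rw [Finset.sum_congr rfl fun j _ => hterm j, Finset.sum_comm]
    refine Finset.sum_eq_zero fun i _ => ?_
    rw [Finset.sum_comm]
    refine Finset.sum_eq_zero fun t _ => ?_
    have hzero : ∑ j : Fin m, γ ^ ((j : ℕ) * ((i : ℕ) + 1 + (t : ℕ))) = 0 := by
      rw [Fin.sum_univ_eq_sum_range fun j => γ ^ (j * ((i : ℕ) + 1 + (t : ℕ)))]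
      apply sum_pow_eq_zero hroot hprim
      have hi := i.isLt; have ht := t.isLt
      intro hdvd
      have h1 : 0 < (i : ℕ) + 1 + (t : ℕ) := by omega
      have h2 : (i : ℕ) + 1 + (t : ℕ) < m := by omega
      exact absurd (Nat.le_of_dvd h1 hdvd) (by omega)
    calc ∑ j : Fin m, c i * γ ^ ((j : ℕ) * ((i : ℕ) + 1) + (j : ℕ) * (t : ℕ)) * c' t
        = (c i * ∑ j : Fin m, γ ^ ((j : ℕ) * ((i : ℕ) + 1 + (t : ℕ)))) * c' t := by
          rw [Finset.mul_sum, Finset.sum_mul]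
          refine Finset.sum_congr rfl fun j _ => ?_
          rw [← Nat.left_distrib]
      _ = 0 := by rw [hzero, mul_zero, zero_mul]

/-- over a finite ring `A` with `γ` a primitive `m`-th root of unity and
`0 < k < m`, the left dual of the right Reed–Solomon code with support
`x = (1, γ, …, γ^{m-1})` and dimension `m - k` (right-spanned by `(γ^{ji})_j` for
`i = 0,…,m-k-1`) equals the left generalized Reed–Solomon code with support and
multiplier `x` and dimension `k` (left-spanned by `(γ^{ji})_j` for `i = 1,…,k`). -/
theorem stmt_5 {A : Type*} [Ring A] [Fintype A] {m k : ℕ}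
    (hk : 0 < k) (hkm : k < m) (γ : A)
    (hroot : γ ^ m = 1)
    (hprim : ∀ i : ℕ, 0 < i → i < m → IsUnit (γ ^ i - 1)) :
    {y : Fin m → A | ∀ s ∈ {w : Fin m → A | ∃ c : Fin (m - k) → A,
        ∀ j, w j = ∑ i : Fin (m - k), γ ^ ((j : ℕ) * (i : ℕ)) * c i},
      ∑ j : Fin m, y j * s j = 0}
    = {w : Fin m → A | ∃ c : Fin k → A,
        ∀ j, w j = ∑ i : Fin k, c i * γ ^ ((j : ℕ) * ((i : ℕ) + 1))} :=
  stmt_5' hk hkm γ hroot hprim (isUnit_m hroot hprim (lt_trans hk hkm))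
end

section
/- Let A be a ring with identity, let Q(X,Y) = Q₀(X) + Q₁(X)·Y ∈ A[X,Y] have degree at most 1 in Y (with the convention (a,b)Q = ∑ aⁱbʲ Q_{ij}), let g ∈ A[X], and let a ∈ A. Then the right evaluation at a of the univariate polynomial (X, g(X))Q := Q₀(X) + ∑ᵢ Xⁱ g(X) Q_{1i} equals (a, (a)g)Q, where (a)g denotes the right evaluation of g at a. -/
open Polynomial

/-- Right evaluation of a polynomial over a possibly noncommutative ring:
`(a)f = ∑ aⁱ fᵢ`. -/
noncomputable def rightEval {A : Type*} [Semiring A] (f : Polynomial A) (a : A) : A :=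
  f.sum fun e c => a ^ e * c

lemma rightEval_add {A : Type*} [Semiring A] (f g : Polynomial A) (a : A) :
    rightEval (f + g) a = rightEval f a + rightEval g a := by
  unfold rightEval
  exact Polynomial.sum_add_index f g _ (fun e => mul_zero _) (fun e c d => mul_add _ _ _)

lemma rightEval_zero {A : Type*} [Semiring A] (a : A) : rightEval (0 : Polynomial A) a = 0 :=
  Polynomial.sum_zero_index _

lemma rightEval_finset_sum {A ι : Type*} [Semiring A] (s : Finset ι) (F : ι → Polynomial A)
    (a : A) : rightEval (∑ i ∈ s, F i) a = ∑ i ∈ s, rightEval (F i) a := by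
  classical
  induction s using Finset.cons_induction with
  | empty => simp [rightEval_zero]
  | cons i s hi ih => simp [Finset.sum_insert hi, rightEval_add, ih]

lemma rightEval_monomial {A : Type*} [Semiring A] (n : ℕ) (c : A) (a : A) :
    rightEval (monomial n c) a = a ^ n * c := by
  unfold rightEval
  rw [Polynomial.sum_monomial_index]
  exact mul_zero _

lemma rightEval_X_pow_mul_mul_C {A : Type*} [Ring A] (i : ℕ) (c : A) (g : Polynomial A) (a : A) :
    rightEval (X ^ i * g * C c) a = a ^ i * rightEval g a * c := by
  classical
  conv_lhs =>
    rw [g.as_sum_support, Finset.mul_sum, Finset.sum_mul]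
  rw [rightEval_finset_sum]
  have hre : rightEval g a = ∑ e ∈ g.support, a ^ e * g.coeff e := by
    simp [rightEval, Polynomial.sum_def]
  rw [hre, Finset.mul_sum, Finset.sum_mul]
  refine Finset.sum_congr rfl fun e he => ?_
  rw [X_pow_eq_monomial, monomial_mul_monomial, ← Polynomial.monomial_zero_left,
    monomial_mul_monomial, rightEval_monomial, add_zero, one_mul, pow_add]
  noncomm_ring

/-- for `Q(X,Y) = Q₀(X) + Q₁(X)·Y` over a ring `A`, `g ∈ A[X]` and
`a ∈ A`, the right evaluation at `a` of the univariate polynomial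
`(X, g(X))Q = Q₀(X) + ∑ᵢ Xⁱ g(X) Q_{1i}` equals
`(a, (a)g)Q = (a)Q₀ + ∑ᵢ aⁱ ((a)g) Q_{1i}`. -/
theorem stmt_10 {A : Type*} [Ring A] (Q₀ Q₁ g : A[X]) (a : A) :
    rightEval (Q₀ + ∑ i ∈ Q₁.support, X ^ i * g * C (Q₁.coeff i)) a
      = rightEval Q₀ a + ∑ i ∈ Q₁.support, a ^ i * rightEval g a * Q₁.coeff i := by
  rw [rightEval_add, rightEval_finset_sum]
  simp [rightEval_X_pow_mul_mul_C]
end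

section
/- Let Γ ∈ M_ℓ(F_{q^s}) be a primitive m-th root of unity and 2 ≤ δ ≤ m. The minimum ℓ-block distance of QBCH_q(m, ℓ, δ, Γ) is at least δ; in particular its minimum Hamming distance is at least δ. -/
open Matrix

/-- The quasi-BCH code `QBCH_q(m, ℓ, δ, Γ)`. -/
def qbch {F K : Type*} [Field F] [Field K] [Algebra F K] (m ℓ δ : ℕ)
    (Γ : Matrix (Fin ℓ) (Fin ℓ) K) : Set (Fin m → Fin ℓ → F) :=
  {c | ∀ i : ℕ, 1 ≤ i → i ≤ δ - 1 →
    ∑ j : Fin m, (Γ ^ (i * (j : ℕ))) *ᵥ (fun r => algebraMap F K (c j r)) = 0}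

lemma key_lemma {K : Type*} [Field K] {m ℓ : ℕ}
    (Γ : Matrix (Fin ℓ) (Fin ℓ) K)
    (hroot : Γ ^ m = 1)
    (hprim : ∀ i : ℕ, 0 < i → i < m → IsUnit (Γ ^ i - 1)) (hm : 0 < m) :
    ∀ (S : Finset (Fin m)) (v : Fin m → Fin ℓ → K),
      (∀ i : ℕ, 1 ≤ i → i ≤ S.card → ∑ j ∈ S, (Γ ^ (i * (j : ℕ))) *ᵥ v j = 0) →
      ∀ j ∈ S, v j = 0 := by
  have hΓu : IsUnit Γ := IsUnit.of_pow_eq_one hroot (by omega)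
  have hdiff : ∀ a b : Fin m, a ≠ b → IsUnit (Γ ^ (a : ℕ) - Γ ^ (b : ℕ)) := by
    have h2 : ∀ a b : Fin m, (b : ℕ) < (a : ℕ) → IsUnit (Γ ^ (a : ℕ) - Γ ^ (b : ℕ)) := by
      intro a b hba
      have : Γ ^ (a : ℕ) - Γ ^ (b : ℕ) = Γ ^ (b : ℕ) * (Γ ^ ((a : ℕ) - (b : ℕ)) - 1) := by
        rw [mul_sub, mul_one, ← pow_add, Nat.add_sub_cancel' hba.le]
      rw [this]
      exact (hΓu.pow _).mul (hprim _ (Nat.sub_pos_of_lt hba)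
        (lt_of_le_of_lt (Nat.sub_le _ _) a.isLt))
    intro a b hab
    rcases lt_or_gt_of_ne (fun h => hab (Fin.ext h) : (a : ℕ) ≠ (b : ℕ)) with h | h
    · rw [← neg_sub]; exact (h2 b a h).neg
    · exact h2 a b h
  intro S
  induction S using Finset.induction_on with
  | empty => intro v _ j hj; exact absurd hj (Finset.notMem_empty j)
  | @insert a s ha IH =>
    intro v hv
    set w : Fin m → Fin ℓ → K := fun j => (Γ ^ (j : ℕ) - Γ ^ (a : ℕ)) *ᵥ v j with hw
    have card_eq : (insert a s).card = s.card + 1 := Finset.card_insert_of_notMem ha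
    have hws : ∀ j ∈ s, w j = 0 := by
      refine IH w ?_
      intro i hi1 his
      have E1 := hv i hi1 (by omega)
      have E2 := hv (i + 1) (by omega) (by omega)
      rw [Finset.sum_insert ha] at E1 E2
      have key : ∀ j ∈ s, (Γ ^ (i * (j : ℕ))) *ᵥ w j
          = (Γ ^ ((i+1) * (j : ℕ))) *ᵥ v j - (Γ ^ (a : ℕ)) *ᵥ ((Γ ^ (i * (j : ℕ))) *ᵥ v j) := by
        intro j _
        have e1 : i*(j:ℕ)+(j:ℕ) = (i+1)*(j:ℕ) := by ring
        have e2 : i*(j:ℕ)+(a:ℕ) = (a:ℕ)+i*(j:ℕ) := by ring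
        rw [hw, mulVec_mulVec, mulVec_mulVec, ← sub_mulVec, mul_sub, ← pow_add, ← pow_add,
          e1, e2, pow_add]
      calc ∑ j ∈ s, (Γ ^ (i * (j : ℕ))) *ᵥ w j
          = ∑ j ∈ s, ((Γ ^ ((i+1) * (j : ℕ))) *ᵥ v j
              - (Γ ^ (a : ℕ)) *ᵥ ((Γ ^ (i * (j : ℕ))) *ᵥ v j)) := Finset.sum_congr rfl key
        _ = (∑ j ∈ s, (Γ ^ ((i+1) * (j : ℕ))) *ᵥ v j)
              - (Γ ^ (a : ℕ)).mulVecLin (∑ j ∈ s, (Γ ^ (i * (j : ℕ))) *ᵥ v j) := by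
            rw [Finset.sum_sub_distrib, map_sum]; rfl
        _ = (- ((Γ ^ ((i+1) * (a : ℕ))) *ᵥ v a))
              - (Γ ^ (a : ℕ)).mulVecLin (- ((Γ ^ (i * (a : ℕ))) *ᵥ v a)) := by
            rw [eq_neg_of_add_eq_zero_right E2, eq_neg_of_add_eq_zero_right E1]
        _ = 0 := by
            have e3 : (a:ℕ) + i*(a:ℕ) = (i+1)*(a:ℕ) := by ring
            rw [map_neg, sub_neg_eq_add, mulVecLin_apply, mulVec_mulVec, ← pow_add, e3,
              neg_add_cancel]
    have hvs : ∀ j ∈ s, v j = 0 := by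
      intro j hj
      have hja : j ≠ a := fun h => ha (h ▸ hj)
      have := hws j hj
      rw [hw] at this
      exact (Matrix.mulVec_injective_iff_isUnit.2 (hdiff j a hja)) (by simpa using this)
    intro j hj
    rcases Finset.mem_insert.1 hj with rfl | hjs
    · have E1 := hv 1 le_rfl (by omega)
      rw [Finset.sum_insert ha] at E1
      have hz : ∑ j ∈ s, (Γ ^ (1 * (j : ℕ))) *ᵥ v j = 0 :=
        Finset.sum_eq_zero fun j hj => by rw [hvs j hj, mulVec_zero]
      rw [hz, add_zero] at E1
      exact (Matrix.mulVec_injective_iff_isUnit.2 (hΓu.pow _)) (by simpa using E1)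
    · exact hvs j hjs

/-- for `Γ ∈ M_ℓ(F_{q^s})` a primitive `m`-th root of unity and
`2 ≤ δ ≤ m`, every nonzero codeword of `QBCH_q(m,ℓ,δ,Γ)` has `ℓ`-block weight at
least `δ`; in particular its Hamming weight is at least `δ`. -/
theorem stmt_17 {F K : Type*} [Field F] [Field K] [Algebra F K] [DecidableEq F]
    {m ℓ δ : ℕ}
    (Γ : Matrix (Fin ℓ) (Fin ℓ) K)
    (hroot : Γ ^ m = 1)
    (hprim : ∀ i : ℕ, 0 < i → i < m → IsUnit (Γ ^ i - 1))
    (hδ2 : 2 ≤ δ) (hδm : δ ≤ m) :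
    ∀ c ∈ qbch (F := F) m ℓ δ Γ, c ≠ 0 →
      δ ≤ (Finset.univ.filter fun j : Fin m => c j ≠ 0).card ∧
      δ ≤ ∑ j : Fin m, hammingNorm (c j) := by
  intro c hc hc0
  set S := Finset.univ.filter fun j : Fin m => c j ≠ 0 with hS
  set v : Fin m → Fin ℓ → K := fun j r => algebraMap F K (c j r) with hv
  have hcard : δ ≤ S.card := by
    by_contra h
    push_neg at h
    have hkey := key_lemma Γ hroot hprim (by omega) S v ?_
    · obtain ⟨j, hj⟩ : ∃ j, c j ≠ 0 := by
        by_contra h'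
        push_neg at h'
        exact hc0 (funext h')
      have hjS : j ∈ S := Finset.mem_filter.2 ⟨Finset.mem_univ j, hj⟩
      apply hj
      funext r
      have h0 := congrFun (hkey j hjS) r
      exact (algebraMap F K).injective (by simpa [hv] using h0)
    · intro i hi1 hiS
      have := hc i hi1 (by omega)
      rw [← this]
      refine Finset.sum_subset (Finset.subset_univ S) fun j _ hjS => ?_
      have : c j = 0 := by
        by_contra hcj
        exact hjS (Finset.mem_filter.2 ⟨Finset.mem_univ j, hcj⟩)
      have hz : v j = 0 := by funext r; simp [hv, this]
      show Γ ^ (i * (j : ℕ)) *ᵥ v j = 0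
      rw [hz, mulVec_zero]
  refine ⟨hcard, le_trans hcard ?_⟩
  calc S.card = ∑ j ∈ S, 1 := (Finset.card_eq_sum_ones S).trans rfl
    _ ≤ ∑ j ∈ S, hammingNorm (c j) := Finset.sum_le_sum fun j hj =>
        hammingNorm_pos_iff.2 (Finset.mem_filter.1 hj).2
    _ ≤ ∑ j : Fin m, hammingNorm (c j) :=
        Finset.sum_le_sum_of_subset (Finset.subset_univ S)
end
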